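/- For the curve germ Z = {y⁶ − 6x²y⁵ + 9x⁴y⁴ − 2x⁵y³ + 6x⁷y² + x¹⁰ − 9x¹¹ = 0}: the polynomial F₁ = y³ − x⁵ − 3x²y² has a y-root that is a Puiseux series S₁ in x with initial terms x^{5/3} + x² + higher order terms, and F₁ is irreducible in ℂ[[x]][y]. -/

import Mathlib

open PowerSeries

noncomputable section

local notation "R" => PowerSeries ℂ

lemma mem_smul_top_iff (n : ℕ) (x : R) :
    x ∈ (((Ideal.span {X} : Ideal R))^n • (⊤ : Submodule R R)) ↔ ∀ i < n, coeff i x = 0 := by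
  rw [smul_eq_mul, Ideal.mul_top, Ideal.span_singleton_pow, Ideal.mem_span_singleton]
  exact PowerSeries.X_pow_dvd_iff

lemma adic_complete : IsAdicComplete (Ideal.span {X} : Ideal R) R := by
  refine { haus' := ?_, prec' := ?_ }
  · intro x hx
    ext i
    have := hx (i+1)
    rw [SModEq.sub_mem, sub_zero, mem_smul_top_iff] at this
    simpa using this i (Nat.lt_succ_self i)
  · intro f hf
    refine ⟨PowerSeries.mk (fun n => coeff n (f (n+1))), fun n => ?_⟩
    rw [SModEq.sub_mem, mem_smul_top_iff]
    intro i hi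
    rw [map_sub, coeff_mk]
    have h := hf (Nat.succ_le_of_lt hi)
    rw [SModEq.sub_mem, mem_smul_top_iff] at h
    have := h i (Nat.lt_succ_self i)
    rw [map_sub, sub_eq_zero] at this
    rw [this, sub_self]

lemma exists_u : ∃ a : R, a ^ 3 - 3 * X * a ^ 2 - 1 = 0 ∧ coeff 0 a = 1 ∧ coeff 1 a = 1 := by
  haveI := adic_complete
  haveI : HenselianRing R (Ideal.span {X}) := inferInstance
  set q : Polynomial R := Polynomial.X ^ 3 - Polynomial.C (3 * X) * Polynomial.X ^ 2 - 1 with hq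
  have hmon : q.Monic := by unfold q; monicity!
  obtain ⟨a, ha, ha1⟩ := HenselianRing.is_henselian (I := Ideal.span {X}) q hmon 1
    (by
      simp only [hq, Polynomial.eval_sub, Polynomial.eval_pow, Polynomial.eval_one,
        Polynomial.eval_mul, Polynomial.eval_X, Polynomial.eval_C]
      rw [Ideal.mem_span_singleton]
      exact ⟨-3, by ring⟩)
    (by
      have hder : (Polynomial.derivative q).eval 1 = 3 - 6 * X := by
        simp only [hq, Polynomial.derivative_sub, Polynomial.derivative_pow,
          Polynomial.derivative_one, Polynomial.derivative_mul, Polynomial.derivative_C,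
          Polynomial.derivative_X, Polynomial.eval_sub, Polynomial.eval_mul, Polynomial.eval_pow,
          Polynomial.eval_add, Polynomial.eval_X, Polynomial.eval_C, Polynomial.eval_one,
          Polynomial.eval_natCast, Polynomial.eval_zero]
        ring
      rw [hder]
      apply IsUnit.of_mul_eq_one (Ideal.Quotient.mk _ (PowerSeries.C 3⁻¹))
      rw [← map_mul, ← map_one (Ideal.Quotient.mk (Ideal.span {X} : Ideal R)),
        Ideal.Quotient.mk_eq_mk_iff_sub_mem, Ideal.mem_span_singleton]
      refine ⟨PowerSeries.C 3⁻¹ * (-6), ?_⟩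
      have h3 : (3 : R) * PowerSeries.C 3⁻¹ = 1 := by
        rw [(map_ofNat (PowerSeries.C : ℂ →+* R) 3).symm, ← map_mul]
        norm_num
      linear_combination h3)
  rw [Ideal.mem_span_singleton] at ha1
  have heq : a ^ 3 - 3 * X * a ^ 2 - 1 = 0 := by
    have h := ha
    simp only [hq, Polynomial.IsRoot, Polynomial.eval_sub, Polynomial.eval_pow,
      Polynomial.eval_one, Polynomial.eval_mul, Polynomial.eval_X, Polynomial.eval_C] at h
    linear_combination h
  obtain ⟨b, hb⟩ := ha1
  have hab : a = 1 + X * b := by rw [← hb]; ring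
  have ha0 : coeff 0 a = 1 := by
    rw [hab]; simp
  refine ⟨a, heq, ha0, ?_⟩
  have key : X * (3 * b - 3 + X * (3 * b ^ 2 - 6 * b + X * (b ^ 3 - 3 * b ^ 2))) = 0 := by
    rw [hab] at heq
    linear_combination heq
  have hX : (X : R) ≠ 0 := X_ne_zero
  have inner : 3 * b - 3 + X * (3 * b ^ 2 - 6 * b + X * (b ^ 3 - 3 * b ^ 2)) = 0 :=
    (mul_eq_zero.mp key).resolve_left hX
  have hb0 : coeff 0 b = 1 := by
    have h := congrArg (constantCoeff) inner
    simp only [map_add, map_mul, map_sub, map_ofNat, constantCoeff_X, zero_mul, add_zero,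
      map_zero, map_one] at h
    rw [coeff_zero_eq_constantCoeff]
    linear_combination h / 3
  rw [hab]
  simp [coeff_succ_X_mul, hb0]

lemma no_root (r : R) : r ^ 3 - X ^ 5 - 3 * X ^ 2 * r ^ 2 ≠ 0 := by
  intro h
  have heq : X ^ 5 + 3 * X ^ 2 * r ^ 2 = r ^ 3 := by linear_combination -h
  rcases eq_or_ne r 0 with rfl | hr
  · rw [zero_pow (by norm_num), zero_pow (by norm_num), mul_zero, add_zero] at heq
    exact pow_ne_zero 5 (X_ne_zero : (X : R) ≠ 0) (by simpa using heq)
  · have hfin : order r ≠ ⊤ := fun ht => hr (order_eq_top.mp ht)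
    obtain ⟨n, hn⟩ : ∃ n : ℕ, r.order = (n : ℕ∞) := by
      lift r.order to ℕ using hfin with n hn
      exact ⟨n, rfl⟩
    have h3 : order (3 : R) = 0 := by
      apply order_eq_nat.mpr
      constructor
      · rw [coeff_zero_eq_constantCoeff, map_ofNat]; norm_num
      · intro i hi; omega
    have h2 : order (3 * X ^ 2 * r ^ 2) = ((2 + 2 * n : ℕ) : ℕ∞) := by
      rw [order_mul, order_mul, h3, order_X_pow, pow_two r, order_mul, hn]
      push_cast
      ring
    have h5 : order (X ^ 5 : R) = ((5 : ℕ) : ℕ∞) := order_X_pow 5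
    have hne : order (X ^ 5 : R) ≠ order (3 * X ^ 2 * r ^ 2) := by
      rw [h2, h5]
      intro hc
      have := Nat.cast_inj.mp hc
      omega
    have hadd := order_add_of_order_ne _ _ hne
    rw [heq] at hadd
    have h3n : order (r ^ 3) = ((3 * n : ℕ) : ℕ∞) := by
      rw [pow_succ, pow_two, order_mul, order_mul, hn]
      push_cast
      ring
    rw [h3n, h2, h5] at hadd
    rcases le_total (((5:ℕ)):ℕ∞) (((2 + 2*n : ℕ)):ℕ∞) with hle | hle
    · rw [inf_eq_left.mpr hle] at hadd
      have := Nat.cast_inj.mp hadd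
      omega
    · rw [inf_eq_right.mpr hle] at hadd
      have h1 := Nat.cast_inj.mp hadd
      have hle' := Nat.cast_le.mp hle
      omega

end

/-- The standard factor `F₁ = y³ - x⁵ - 3x²y²` of the germ
`Z = {y⁶ - 6x²y⁵ + 9x⁴y⁴ - 2x⁵y³ + 6x⁷y² + x¹⁰ - 9x¹¹ = 0}` has a Puiseux
`y`-root with initial terms `x^{5/3} + x² + ⋯` (written via `x = t³` as a power
series `S = t⁵ + t⁶ + ⋯`), and `F₁` is irreducible in `ℂ[[x]][y]`. -/
theorem stmt_15 :
    (∃ S : PowerSeries ℂ,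
      (∀ i, i < 5 → PowerSeries.coeff (R := ℂ) i S = 0) ∧
      PowerSeries.coeff (R := ℂ) 5 S = 1 ∧ PowerSeries.coeff (R := ℂ) 6 S = 1 ∧
      S ^ 3 - PowerSeries.X ^ 15 - 3 * PowerSeries.X ^ 6 * S ^ 2 = 0) ∧
    Irreducible (Polynomial.X ^ 3 - Polynomial.C (PowerSeries.X ^ 5)
      - 3 * Polynomial.C (PowerSeries.X ^ 2) * Polynomial.X ^ 2 :
        Polynomial (PowerSeries ℂ)) := by
  constructor
  · obtain ⟨a, heq, ha0, ha1⟩ := exists_u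
    refine ⟨X ^ 5 * a, ?_, ?_, ?_, ?_⟩
    · intro i hi
      exact PowerSeries.X_pow_dvd_iff.mp ⟨a, rfl⟩ i hi
    · simpa [ha0] using coeff_X_pow_mul a 5 0
    · simpa [ha1] using coeff_X_pow_mul a 5 1
    · linear_combination (X : PowerSeries ℂ) ^ 15 * heq
  · set p : Polynomial (PowerSeries ℂ) := Polynomial.X ^ 3 - Polynomial.C (X ^ 5)
      - 3 * Polynomial.C (X ^ 2) * Polynomial.X ^ 2 with hp
    have hmon : p.Monic := by unfold p; monicity!
    have hdeg : p.natDegree = 3 := by unfold p; compute_degree!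
    rw [hmon.irreducible_iff_roots_eq_zero_of_degree_le_three (by omega) (by omega),
      Multiset.eq_zero_iff_forall_notMem]
    intro r hr
    rw [Polynomial.mem_roots hmon.ne_zero] at hr
    apply no_root r
    simpa [hp, Polynomial.IsRoot, Polynomial.eval_sub, Polynomial.eval_mul,
      Polynomial.eval_pow, Polynomial.eval_C, Polynomial.eval_X,
      Polynomial.eval_ofNat] using hr
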